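/- The inequality δp ≤ θ̄·δB̄·z⁺ + θ̲·δB̲·z⁻ is valid on P₀ ∪ P₁ ∪ P₂, and hence on conv(P₀ ∪ P₁ ∪ P₂). -/
import Mathlib


abbrev Pt := ℝ × ℝ × ℝ × ℝ × ℝ

def P0 (tl tu : ℝ) : Set Pt :=
  {p | p.1 = 0 ∧ p.2.1 = 0 ∧ p.2.2.1 = 0 ∧ p.2.2.2.2 = 0 ∧ tl ≤ p.2.2.2.1 ∧ p.2.2.2.1 ≤ tu}

def P1 (tu bl bu : ℝ) : Set Pt :=
  {p | p.1 = 1 ∧ p.2.1 = 1 ∧ p.2.2.1 = 0 ∧ 0 ≤ p.2.2.2.1 ∧ p.2.2.2.1 ≤ tu ∧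
    bl * p.2.2.2.1 ≤ p.2.2.2.2 ∧ p.2.2.2.2 ≤ bu * p.2.2.2.1}

def P2 (tl bl bu : ℝ) : Set Pt :=
  {p | p.1 = 1 ∧ p.2.1 = 0 ∧ p.2.2.1 = 1 ∧ tl ≤ p.2.2.2.1 ∧ p.2.2.2.1 ≤ 0 ∧
    bu * p.2.2.2.1 ≤ p.2.2.2.2 ∧ p.2.2.2.2 ≤ bl * p.2.2.2.1}

theorem stmt_6 (tl tu bl bu : ℝ) (h1 : tl < 0) (h2 : 0 < tu) (h3 : bl < 0) (h4 : 0 < bu) :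
    (∀ p ∈ P0 tl tu ∪ P1 tu bl bu ∪ P2 tl bl bu,
      p.2.2.2.2 ≤ tu * bu * p.2.1 + tl * bl * p.2.2.1) ∧
    (∀ p ∈ convexHull ℝ (P0 tl tu ∪ P1 tu bl bu ∪ P2 tl bl bu),
      p.2.2.2.2 ≤ tu * bu * p.2.1 + tl * bl * p.2.2.1) := by
  have hvalid : ∀ p ∈ P0 tl tu ∪ P1 tu bl bu ∪ P2 tl bl bu,
      p.2.2.2.2 ≤ tu * bu * p.2.1 + tl * bl * p.2.2.1 := by
    rintro p ((⟨_, h2', h3', h4', _, _⟩ | ⟨_, h2', h3', ht0, htu, _, hpu⟩) |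
      ⟨_, h2', h3', htl, ht0, _, hpl⟩)
    · rw [h2', h3', h4']; ring_nf; simp
    · rw [h2', h3']
      nlinarith
    · rw [h2', h3']
      nlinarith
  refine ⟨hvalid, ?_⟩
  have hconv : Convex ℝ {p : Pt | p.2.2.2.2 ≤ tu * bu * p.2.1 + tl * bl * p.2.2.1} := by
    intro x hx y hy a b ha hb hab
    simp only [Set.mem_setOf_eq] at *
    simp only [Prod.smul_fst, Prod.smul_snd, Prod.fst_add, Prod.snd_add, smul_eq_mul]
    nlinarith [mul_le_mul_of_nonneg_left hx ha, mul_le_mul_of_nonneg_left hy hb]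
  intro p hp
  exact convexHull_min hvalid hconv hp
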